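/- Let γ : ℝ → ℝ² be a C¹, L-periodic (L > 0) curve with γ'(s) ≠ 0 for all s, let K denote its image, and let n(s) = J(γ'(s))/‖γ'(s)‖ be the unit normal. Then for every point p ∈ ℝ² with dist(p, K) < 1 there exist s ∈ ℝ and t ∈ (−1, 1) such that p = γ(s) + t·n(s) and |t| = dist(p, K). In other words, the image of the ribbon map Γ(s, t) = γ(s) + t·n(s), (s, t) ∈ ℝ × (−1, 1), contains every point at distance less than 1 from the curve. -/

import Mathlib

noncomputable section

open scoped RealInnerProductSpace

/-- Rotation by π/2 in the plane: `J (x, y) = (-y, x)`. -/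
def J (v : EuclideanSpace ℝ (Fin 2)) : EuclideanSpace ℝ (Fin 2) := WithLp.toLp 2 ![-(v 1), v 0]

lemma norm_J (v : EuclideanSpace ℝ (Fin 2)) : ‖J v‖ = ‖v‖ := by
  simp [EuclideanSpace.norm_eq, Fin.sum_univ_two, show J v 0 = -(v 1) from rfl,
    show J v 1 = v 0 from rfl]
  ring_nf

lemma orth_eq_smul_J {v w : EuclideanSpace ℝ (Fin 2)} (hv : v ≠ 0)
    (h : ⟪w, v⟫ = 0) : ∃ c : ℝ, w = c • J v := by
  have hD : v 0 ^ 2 + v 1 ^ 2 ≠ 0 := by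
    intro hd
    apply hv
    have h0 : v 0 = 0 := by nlinarith [sq_nonneg (v 0), sq_nonneg (v 1)]
    have h1 : v 1 = 0 := by nlinarith [sq_nonneg (v 0), sq_nonneg (v 1)]
    ext i; fin_cases i <;> simp [h0, h1]
  have hin : w 0 * v 0 + w 1 * v 1 = 0 := by
    simp [PiLp.inner_apply, Fin.sum_univ_two] at h; linarith
  refine ⟨(w 1 * v 0 - w 0 * v 1) / (v 0 ^ 2 + v 1 ^ 2), ?_⟩
  ext i
  fin_cases i <;>
    simp only [PiLp.smul_apply, smul_eq_mul, J, WithLp.ofLp_toLp, Fin.zero_eta, Fin.mk_one, Matrix.cons_val_zero, Matrix.cons_val_one,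
      Matrix.head_cons] <;>
    field_simp
  · linear_combination v 0 * hin
  · linear_combination v 1 * hin

/-- The ribbon map of a C¹ periodic immersed plane curve covers the open
`1`-neighbourhood of the curve: every point `p` at distance `< 1` from the image `K`
of `γ` is of the form `γ s + t • n s` with `t ∈ (-1, 1)` and `|t| = dist (p, K)`,
where `n s = J (γ' s) / ‖γ' s‖` is the unit normal. -/
theorem ribbon_covers_neighbourhood
    (γ : ℝ → EuclideanSpace ℝ (Fin 2)) (L : ℝ) (hL : 0 < L)
    (hC1 : ContDiff ℝ 1 γ) (hper : Function.Periodic γ L)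
    (himm : ∀ s, deriv γ s ≠ 0)
    (p : EuclideanSpace ℝ (Fin 2))
    (hp : Metric.infDist p (Set.range γ) < 1) :
    ∃ s : ℝ, ∃ t ∈ Set.Ioo (-1 : ℝ) 1,
      p = γ s + t • (‖deriv γ s‖⁻¹ • J (deriv γ s)) ∧
      |t| = Metric.infDist p (Set.range γ) := by
  have hK : Set.range γ = γ '' Set.Icc 0 (0 + L) := (hper.image_Icc hL 0).symm
  have hcomp : IsCompact (Set.range γ) := by
    rw [hK]; exact (isCompact_Icc.image hC1.continuous)
  obtain ⟨q, hq, hdq⟩ := hcomp.exists_infDist_eq_dist ⟨γ 0, Set.mem_range_self 0⟩ p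
  obtain ⟨s, rfl⟩ := hq
  -- s is a global minimizer of u ↦ dist p (γ u)
  have hmin : ∀ u, dist p (γ s) ≤ dist p (γ u) := fun u =>
    hdq ▸ Metric.infDist_le_dist_of_mem (Set.mem_range_self u)
  set v := deriv γ s with hv
  set w : EuclideanSpace ℝ (Fin 2) := p - γ s with hw
  -- derivative of squared distance is zero at s
  have hdγ : HasDerivAt γ v s := (hC1.differentiable one_ne_zero s).hasDerivAt
  have hdsub : HasDerivAt (fun u => p - γ u) (0 - v) s := (hasDerivAt_const s p).sub hdγ
  have hg : HasDerivAt (fun u => (inner ℝ (p - γ u) (p - γ u) : ℝ))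
      (inner ℝ (p - γ s) (0 - v) + inner ℝ (0 - v) (p - γ s)) s := hdsub.inner ℝ hdsub
  have hloc : IsLocalMin (fun u => (inner ℝ (p - γ u) (p - γ u) : ℝ)) s := by
    apply Filter.Eventually.of_forall
    intro u
    simp only [real_inner_self_eq_norm_sq]
    have h1 : ‖p - γ s‖ ≤ ‖p - γ u‖ := by
      simpa [dist_eq_norm] using hmin u
    exact pow_le_pow_left₀ (norm_nonneg _) h1 2
  have hzero := hloc.hasDerivAt_eq_zero hg
  have horth : (inner ℝ w v : ℝ) = 0 := by
    simp only [zero_sub, inner_neg_right, inner_neg_left, real_inner_comm (p - γ s) v] at hzero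
    have h2 : (inner ℝ (p - γ s) v : ℝ) = 0 := by linarith
    rw [hw]; exact h2
  obtain ⟨c, hc⟩ := orth_eq_smul_J (himm s) horth
  have hvne : ‖v‖ ≠ 0 := norm_ne_zero_iff.mpr (himm s)
  refine ⟨s, c * ‖v‖, ?_, ?_, ?_⟩
  · -- |t| < 1
    have habs : |c * ‖v‖| = Metric.infDist p (Set.range γ) := by
      rw [hdq, dist_eq_norm, ← hw, hc, norm_smul, norm_J, Real.norm_eq_abs, abs_mul,
        abs_norm]
    constructor
    · nlinarith [abs_nonneg (c * ‖v‖), neg_abs_le (c * ‖v‖), habs ▸ hp]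
    · calc c * ‖v‖ ≤ |c * ‖v‖| := le_abs_self _
        _ < 1 := habs ▸ hp
  · rw [smul_smul, mul_assoc, mul_inv_cancel₀ hvne, mul_one, ← hc, hw]
    abel
  · rw [hdq, dist_eq_norm, ← hw, hc, norm_smul, norm_J, Real.norm_eq_abs, abs_mul, abs_norm]

end
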